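/- The quotient ring ℂ[t, t₁, …, t_m]/(t − t₁^a, …, t − t_m^a, t₁t₂⋯t_m) has dimension m·a^{m−1} as a ℂ-vector space, for positive integers a and m. -/

import Mathlib

open MvPolynomial Finset

namespace ADeformAux

variable (a : ℕ) [NeZero a] {m : ℕ}

/-- number of zero entries of `e` -/
def z {a m : ℕ} [NeZero a] (e : Fin m → Fin a) : ℕ :=
  (univ.filter fun i => e i = 0).card

/-- the index type for our basis -/
abbrev T (a m : ℕ) [NeZero a] := Σ e : Fin m → Fin a, Fin (z e)

/-- residues of an exponent vector -/
def rr (d : Fin (m + 1) →₀ ℕ) : Fin m → Fin a :=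
  fun i => ⟨d i.succ % a, Nat.mod_lt _ (Nat.pos_of_ne_zero (NeZero.ne a))⟩

/-- total `x`-power of an exponent vector after reduction -/
def NN (d : Fin (m + 1) →₀ ℕ) : ℕ := d 0 + ∑ i : Fin m, d i.succ / a

/-- normal form indicator vector, auxiliary version -/
noncomputable def wAux (a m : ℕ) [NeZero a] (e : Fin m → Fin a) (n : ℕ) : T a m → ℂ :=
  if h : n < z e then Pi.single ⟨e, ⟨n, h⟩⟩ 1 else 0

/-- normal form indicator vector of a monomial -/
noncomputable def w (d : Fin (m + 1) →₀ ℕ) : T a m → ℂ :=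
  wAux a m (rr a d) (NN a d)

lemma wAux_congr {e e' : Fin m → Fin a} {n n' : ℕ} (he : e = e') (hn : n = n') :
    wAux a m e n = wAux a m e' n' := by subst he; subst hn; rfl

/-- exponent vector of a basis index -/
noncomputable def dOf (t : T a m) : Fin (m + 1) →₀ ℕ :=
  Finsupp.single 0 (t.2 : ℕ) + ∑ i : Fin m, Finsupp.single i.succ (t.1 i : ℕ)

lemma dOf_apply_zero (t : T a m) : dOf a t 0 = (t.2 : ℕ) := by
  simp [dOf, Finsupp.finset_sum_apply, Finsupp.single_apply, (Fin.succ_ne_zero _)]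

lemma dOf_apply_succ (t : T a m) (j : Fin m) : dOf a t j.succ = (t.1 j : ℕ) := by
  simp [dOf, Finsupp.finset_sum_apply, Finsupp.single_apply, (Fin.succ_ne_zero j).symm,
    Fin.succ_inj]

lemma rr_dOf (t : T a m) : rr a (dOf a t) = t.1 := by
  funext j
  ext
  simp [rr, dOf_apply_succ, Nat.mod_eq_of_lt (t.1 j).isLt]

lemma NN_dOf (t : T a m) : NN a (dOf a t) = (t.2 : ℕ) := by
  simp [NN, dOf_apply_zero, dOf_apply_succ, Nat.div_eq_of_lt (t.1 _).isLt]

lemma w_dOf (t : T a m) : w a (dOf a t) = Pi.single t 1 := by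
  rw [w, wAux_congr a (rr_dOf a t) (NN_dOf a t), wAux, dif_pos t.2.isLt]



lemma w_gen1 (d : Fin (m+1) →₀ ℕ) (i : Fin m) :
    w a (d + Finsupp.single 0 1) = w a (d + Finsupp.single i.succ a) := by
  have ha : 0 < a := Nat.pos_of_ne_zero (NeZero.ne a)
  have hr : rr a (d + Finsupp.single 0 1) = rr a (d + Finsupp.single i.succ a) := by
    funext j
    ext
    show (d + Finsupp.single 0 1 : Fin (m+1) →₀ ℕ) j.succ % a
        = (d + Finsupp.single i.succ a : Fin (m+1) →₀ ℕ) j.succ % a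
    have h1 : (d + Finsupp.single 0 1 : Fin (m+1) →₀ ℕ) j.succ = d j.succ := by
      simp [Finsupp.single_apply, (Fin.succ_ne_zero j).symm]
    rw [h1]
    rcases eq_or_ne j i with rfl | h
    · simp [Finsupp.single_apply]
    · simp [Finsupp.single_apply, Fin.succ_inj, h.symm]
  have hN : NN a (d + Finsupp.single 0 1) = NN a (d + Finsupp.single i.succ a) := by
    show (d + Finsupp.single 0 1 : Fin (m+1) →₀ ℕ) 0
          + ∑ j : Fin m, (d + Finsupp.single 0 1 : Fin (m+1) →₀ ℕ) j.succ / a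
        = (d + Finsupp.single i.succ a : Fin (m+1) →₀ ℕ) 0
          + ∑ j : Fin m, (d + Finsupp.single i.succ a : Fin (m+1) →₀ ℕ) j.succ / a
    have e0 : (d + Finsupp.single 0 1 : Fin (m+1) →₀ ℕ) 0 = d 0 + 1 := by
      simp
    have e0' : (d + Finsupp.single i.succ a : Fin (m+1) →₀ ℕ) 0 = d 0 := by
      simp [Finsupp.single_apply, Fin.succ_ne_zero]
    have e1 : ∀ j : Fin m, (d + Finsupp.single 0 1 : Fin (m+1) →₀ ℕ) j.succ = d j.succ := by
      intro j; simp [Finsupp.single_apply, (Fin.succ_ne_zero j).symm]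
    have h2 : ∀ j : Fin m, (d + Finsupp.single i.succ a : Fin (m+1) →₀ ℕ) j.succ / a
        = d j.succ / a + if j = i then 1 else 0 := by
      intro j
      rcases eq_or_ne j i with rfl | h
      · simp [Finsupp.single_apply, Nat.add_div_right _ ha]
      · simp [Finsupp.single_apply, Fin.succ_inj, h.symm, h]
    rw [e0, e0', Finset.sum_congr rfl fun j _ => by rw [e1 j],
      Finset.sum_congr rfl fun j _ => h2 j, Finset.sum_add_distrib]
    simp [Finset.sum_ite_eq']
    ring
  rw [w, w, wAux_congr a hr hN]

/-- the exponent vector of the monomial `t₁⋯t_m` -/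
noncomputable def dd (m : ℕ) : Fin (m+1) →₀ ℕ := ∑ i : Fin m, Finsupp.single i.succ 1

lemma w_gen2 (d : Fin (m+1) →₀ ℕ) : w a (d + dd m) = 0 := by
  have ha : 0 < a := Nat.pos_of_ne_zero (NeZero.ne a)
  have hsucc : ∀ j : Fin m, (d + dd m : Fin (m+1) →₀ ℕ) j.succ = d j.succ + 1 := by
    intro j
    simp [dd, Finsupp.finset_sum_apply, Finsupp.single_apply, Fin.succ_inj]
  have h0 : (d + dd m : Fin (m+1) →₀ ℕ) 0 = d 0 := by
    simp [dd, Finsupp.finset_sum_apply, Finsupp.single_apply, Fin.succ_ne_zero]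
  rw [w, wAux, dif_neg]
  push_neg
  -- `z (rr a (d + dd m)) ≤ NN a (d + dd m)`
  have hz : z (rr a (d + dd m))
      = ∑ j : Fin m, if (d j.succ + 1) % a = 0 then 1 else 0 := by
    rw [z, Finset.card_filter]
    refine Finset.sum_congr rfl fun j _ => ?_
    congr 1
    simp only [rr, hsucc j]
    simp [Fin.ext_iff]
  rw [hz]
  have hb : ∀ j : Fin m, (if (d j.succ + 1) % a = 0 then 1 else 0)
      ≤ (d + dd m : Fin (m+1) →₀ ℕ) j.succ / a := by
    intro j
    rw [hsucc j]
    split_ifs with h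
    · have : a ∣ d j.succ + 1 := Nat.dvd_of_mod_eq_zero h
      exact (Nat.one_le_div_iff ha).mpr (Nat.le_of_dvd (Nat.succ_pos _) this)
    · exact Nat.zero_le _
  calc ∑ j : Fin m, (if (d j.succ + 1) % a = 0 then 1 else 0)
      ≤ ∑ j : Fin m, (d + dd m : Fin (m+1) →₀ ℕ) j.succ / a := Finset.sum_le_sum fun j _ => hb j
    _ ≤ NN a (d + dd m) := Nat.le_add_left _ _



/-- the normal form linear functional -/
noncomputable def Psi (a m : ℕ) [NeZero a] :
    MvPolynomial (Fin (m + 1)) ℂ →ₗ[ℂ] (T a m → ℂ) :=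
  (basisMonomials (Fin (m + 1)) ℂ).constr ℂ (w a)

lemma Psi_monomial (d : Fin (m+1) →₀ ℕ) (c : ℂ) :
    Psi a m (monomial d c) = c • w a d := by
  have h1 : (monomial d c : MvPolynomial (Fin (m+1)) ℂ) = c • monomial d 1 := by
    rw [smul_monomial, smul_eq_mul, mul_one]
  have h2 : (monomial d 1 : MvPolynomial (Fin (m+1)) ℂ)
      = basisMonomials (Fin (m+1)) ℂ d := by
    rw [coe_basisMonomials]
  rw [h1, map_smul, h2, Psi, Module.Basis.constr_basis]

lemma prod_monomial_one {ι : Type*} (s : Finset ι) (f : ι → (Fin (m+1) →₀ ℕ)) :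
    ∏ i ∈ s, (monomial (f i) (1 : ℂ)) = monomial (∑ i ∈ s, f i) 1 := by
  classical
  induction s using Finset.induction_on with
  | empty => simp [monomial_eq]
  | @insert x s hns ih =>
      rw [Finset.prod_insert hns, ih, monomial_mul, Finset.sum_insert hns, mul_one]

lemma Psi_mul_gen1 (p : MvPolynomial (Fin (m+1)) ℂ) (i : Fin m) :
    Psi a m (p * (X 0 - X i.succ ^ a)) = 0 := by
  induction p using MvPolynomial.induction_on' with
  | add p q hp hq => rw [add_mul, map_add, hp, hq, add_zero]
  | monomial d c =>
      have hX0 : (X 0 : MvPolynomial (Fin (m+1)) ℂ) = monomial (Finsupp.single 0 1) 1 := by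
        rw [← X_pow_eq_monomial, pow_one]
      have hXi : (X i.succ ^ a : MvPolynomial (Fin (m+1)) ℂ)
          = monomial (Finsupp.single i.succ a) 1 := X_pow_eq_monomial
      rw [mul_sub, hX0, hXi, monomial_mul, monomial_mul, map_sub, Psi_monomial, Psi_monomial,
        mul_one, w_gen1 a d i, sub_self]

lemma prod_X_succ_eq (m : ℕ) :
    (∏ i : Fin m, X i.succ : MvPolynomial (Fin (m+1)) ℂ) = monomial (dd m) 1 := by
  rw [dd, ← prod_monomial_one]
  refine Finset.prod_congr rfl fun i _ => ?_
  rw [← X_pow_eq_monomial, pow_one]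

lemma Psi_mul_gen2 (p : MvPolynomial (Fin (m+1)) ℂ) :
    Psi a m (p * ∏ i : Fin m, X i.succ) = 0 := by
  induction p using MvPolynomial.induction_on' with
  | add p q hp hq => rw [add_mul, map_add, hp, hq, add_zero]
  | monomial d c =>
      rw [prod_X_succ_eq, monomial_mul, Psi_monomial, mul_one, w_gen2 a d, smul_zero]

/-- the generating set of the ideal -/
noncomputable def S (a m : ℕ) : Set (MvPolynomial (Fin (m + 1)) ℂ) :=
  {p | ∃ i : Fin m, p = X 0 - X i.succ ^ a} ∪ {∏ i : Fin m, X i.succ}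

/-- the ideal of elements killed by `Psi` after arbitrary multiplication -/
noncomputable def Wid (a m : ℕ) [NeZero a] : Ideal (MvPolynomial (Fin (m + 1)) ℂ) where
  carrier := {x | ∀ p, Psi a m (p * x) = 0}
  zero_mem' := by intro p; rw [mul_zero, map_zero]
  add_mem' := by intro x y hx hy p; rw [mul_add, map_add, hx, hy, add_zero]
  smul_mem' := by intro r x hx p; rw [smul_eq_mul, ← mul_assoc]; exact hx (p * r)

lemma Psi_vanish {x : MvPolynomial (Fin (m+1)) ℂ} (hx : x ∈ Ideal.span (S a m)) :
    Psi a m x = 0 := by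
  have hle : Ideal.span (S a m) ≤ Wid a m := by
    rw [Ideal.span_le]
    rintro g (⟨i, rfl⟩ | rfl)
    · exact fun p => Psi_mul_gen1 a p i
    · exact fun p => Psi_mul_gen2 a p
  have := hle hx 1
  rwa [one_mul] at this



section QuotientSide

variable {R : Type*} [CommRing R] (q : MvPolynomial (Fin (m + 1)) ℂ →+* R)

lemma q_monomial (hx : ∀ i : Fin m, q (X i.succ) ^ a = q (X 0)) (d : Fin (m+1) →₀ ℕ) :
    q (monomial d 1) = q (X 0) ^ NN a d * ∏ i : Fin m, q (X i.succ) ^ (rr a d i : ℕ) := by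
  have h1 : (monomial d 1 : MvPolynomial (Fin (m+1)) ℂ) = ∏ j : Fin (m+1), X j ^ d j := by
    rw [monomial_eq, C_1, one_mul, Finsupp.prod_pow]
  rw [h1, map_prod, Fin.prod_univ_succ]
  simp only [map_pow]
  have h2 : ∀ i : Fin m, q (X i.succ) ^ d i.succ
      = q (X 0) ^ (d i.succ / a) * q (X i.succ) ^ (rr a d i : ℕ) := by
    intro i
    conv_lhs => rw [← Nat.div_add_mod (d i.succ) a]
    rw [pow_add, pow_mul, hx i]
    rfl
  rw [Finset.prod_congr rfl fun i _ => h2 i, Finset.prod_mul_distrib,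
    Finset.prod_pow_eq_pow_sum, ← mul_assoc, ← pow_add]
  rfl

lemma q_monomial_zero (hx : ∀ i : Fin m, q (X i.succ) ^ a = q (X 0))
    (hy : ∏ i : Fin m, q (X i.succ) = 0) (d : Fin (m+1) →₀ ℕ)
    (h : ¬ NN a d < z (rr a d)) : q (monomial d 1) = 0 := by
  rw [q_monomial a q hx d]
  set e := rr a d with he
  have hz : z e ≤ NN a d := not_lt.1 h
  obtain ⟨k, hk⟩ : ∃ k, NN a d = k + z e := ⟨NN a d - z e, (Nat.sub_add_cancel hz).symm⟩
  rw [hk, pow_add, mul_assoc]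
  suffices hs : q (X 0) ^ z e * ∏ i : Fin m, q (X i.succ) ^ (e i : ℕ) = 0 by
    rw [hs, mul_zero]
  classical
  have h1 : q (X 0) ^ z e = ∏ i ∈ univ.filter fun i => e i = 0, q (X i.succ) ^ a := by
    rw [Finset.prod_congr rfl fun i _ => hx i, Finset.prod_const, z]
  have h2 : ∏ i : Fin m, q (X i.succ) ^ (e i : ℕ)
      = ∏ i ∈ univ.filter fun i => ¬ e i = 0, q (X i.succ) ^ (e i : ℕ) := by
    rw [← Finset.prod_filter_mul_prod_filter_not univ (fun i => e i = 0)]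
    have : ∏ i ∈ univ.filter fun i => e i = 0, q (X i.succ) ^ (e i : ℕ) = 1 := by
      refine Finset.prod_eq_one fun i hi => ?_
      rw [Finset.mem_filter] at hi
      rw [hi.2, Fin.val_zero, pow_zero]
    rw [this, one_mul]
  set c : Fin m → ℕ := fun i => if e i = 0 then a else (e i : ℕ) with hc
  have h3 : q (X 0) ^ z e * ∏ i : Fin m, q (X i.succ) ^ (e i : ℕ)
      = ∏ i : Fin m, q (X i.succ) ^ c i := by
    rw [h1, h2, ← Finset.prod_filter_mul_prod_filter_not univ (fun i => e i = 0)
      (fun i => q (X i.succ) ^ c i)]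
    congr 1
    · refine Finset.prod_congr rfl fun i hi => ?_
      rw [Finset.mem_filter] at hi
      rw [hc]
      simp [hi.2]
    · refine Finset.prod_congr rfl fun i hi => ?_
      rw [Finset.mem_filter] at hi
      rw [hc]
      simp [hi.2]
  have hc1 : ∀ i, 1 ≤ c i := by
    intro i
    simp only [hc]
    split_ifs with hh
    · exact Nat.pos_of_ne_zero (NeZero.ne a)
    · exact Nat.pos_of_ne_zero fun h0 => hh (Fin.ext (by simpa using h0))
  have h4 : ∀ i : Fin m, q (X i.succ) ^ c i = q (X i.succ) * q (X i.succ) ^ (c i - 1) := by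
    intro i
    conv_lhs => rw [← Nat.succ_pred_eq_of_pos (hc1 i)]
    rw [pow_succ, mul_comm, Nat.pred_eq_sub_one]
  rw [h3, Finset.prod_congr rfl fun i _ => h4 i, Finset.prod_mul_distrib, hy, zero_mul]

end QuotientSide



lemma card_T (a m : ℕ) [NeZero a] : Fintype.card (T a m) = m * a ^ (m - 1) := by
  classical
  rw [Fintype.card_sigma]
  simp only [Fintype.card_fin]
  have h1 : ∀ e : Fin m → Fin a, z e = ∑ i : Fin m, if e i = 0 then 1 else 0 := by
    intro e; rw [z, Finset.card_filter]
  rw [Finset.sum_congr rfl fun e _ => h1 e, Finset.sum_comm]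
  have h2 : ∀ i : Fin m,
      (∑ e : Fin m → Fin a, if e i = 0 then 1 else 0) = a ^ (m - 1) := by
    intro i
    rw [Fintype.sum_equiv (Equiv.funSplitAt i (Fin a))
      (fun e => if e i = 0 then 1 else 0) (fun p => if p.1 = 0 then 1 else 0)
      (fun e => by simp [Equiv.funSplitAt])]
    rw [Fintype.sum_prod_type]
    have h3 : ∀ v : Fin a, (∑ _f : { j : Fin m // j ≠ i } → Fin a,
        if v = 0 then 1 else 0) = if v = 0 then Fintype.card ({ j : Fin m // j ≠ i } → Fin a) else 0 := by
      intro v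
      rw [Finset.sum_const, Finset.card_univ, smul_eq_mul]
      split_ifs <;> simp
    rw [Finset.sum_congr rfl fun v _ => h3 v, Finset.sum_ite_eq' univ (0 : Fin a)]
    simp only [Finset.mem_univ, if_true]
    rw [Fintype.card_fun, Fintype.card_fin]
    congr 1
    have : Fintype.card { j : Fin m // j ≠ i } = m - 1 := by
      rw [Fintype.card_subtype_compl, Fintype.card_subtype_eq, Fintype.card_fin]
    rw [this]
  rw [Finset.sum_congr rfl fun i _ => h2 i, Finset.sum_const, Finset.card_univ,
    Fintype.card_fin, smul_eq_mul]

end ADeformAux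

open ADeformAux

/-- The quotient ring `ℂ[t, t₁, …, t_m]/(t − t₁^a, …, t − t_m^a, t₁t₂⋯t_m)` has dimension
`m·a^{m−1}` as a `ℂ`-vector space. Here `t = X 0` and `tᵢ = X i.succ` in
`ℂ[X₀,…,X_m] = MvPolynomial (Fin (m+1)) ℂ`. -/
theorem finrank_quotient_aDeformation (a m : ℕ) (ha : 0 < a) (hm : 0 < m) :
    Module.finrank ℂ
      (MvPolynomial (Fin (m + 1)) ℂ ⧸
        Ideal.span
          (({p | ∃ i : Fin m, p = X 0 - X i.succ ^ a} ∪
            {∏ i : Fin m, X i.succ}) : Set (MvPolynomial (Fin (m + 1)) ℂ))) =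
      m * a ^ (m - 1) := by
  classical
  haveI : NeZero a := ⟨ha.ne'⟩
  set I : Ideal (MvPolynomial (Fin (m + 1)) ℂ) := Ideal.span (S a m) with hI
  show Module.finrank ℂ (MvPolynomial (Fin (m + 1)) ℂ ⧸ I) = m * a ^ (m - 1)
  set q := Ideal.Quotient.mkₐ ℂ I with hqdef
  -- ring facts in the quotient
  have hx : ∀ i : Fin m, q (X i.succ) ^ a = q (X 0) := by
    intro i
    have hmem : (X 0 - X i.succ ^ a : MvPolynomial (Fin (m + 1)) ℂ) ∈ I :=
      Ideal.subset_span (Or.inl ⟨i, rfl⟩)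
    have h0 : q (X 0 - X i.succ ^ a) = 0 := by
      rw [hqdef, Ideal.Quotient.mkₐ_eq_mk, Ideal.Quotient.eq_zero_iff_mem]
      exact hmem
    rw [map_sub, sub_eq_zero, map_pow] at h0
    exact h0.symm
  have hy : ∏ i : Fin m, q (X i.succ) = 0 := by
    have hmem : (∏ i : Fin m, X i.succ : MvPolynomial (Fin (m + 1)) ℂ) ∈ I :=
      Ideal.subset_span (Or.inr rfl)
    rw [← map_prod, hqdef, Ideal.Quotient.mkₐ_eq_mk, Ideal.Quotient.eq_zero_iff_mem]
    exact hmem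
  have hx' : ∀ i : Fin m, q.toRingHom (X i.succ) ^ a = q.toRingHom (X 0) := hx
  have hy' : ∏ i : Fin m, q.toRingHom (X i.succ) = 0 := hy
  -- the comparison map
  set Φ : (T a m → ℂ) →ₗ[ℂ] (MvPolynomial (Fin (m + 1)) ℂ ⧸ I) :=
    (Pi.basisFun ℂ (T a m)).constr ℂ (fun t => q (monomial (dOf a t) 1)) with hΦdef
  have hΦsingle : ∀ t : T a m, Φ (Pi.single t 1) = q (monomial (dOf a t) 1) := by
    intro t
    rw [hΦdef, ← Pi.basisFun_apply, Module.Basis.constr_basis]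
  have keyΦ : ∀ d : Fin (m + 1) →₀ ℕ, q (monomial d 1) = Φ (w a d) := by
    intro d
    by_cases h : NN a d < z (rr a d)
    · rw [w, wAux, dif_pos h, hΦsingle]
      set t : T a m := ⟨rr a d, ⟨NN a d, h⟩⟩ with ht
      have h1 := q_monomial a q.toRingHom hx' d
      have h2 := q_monomial a q.toRingHom hx' (dOf a t)
      rw [rr_dOf, NN_dOf] at h2
      show q.toRingHom (monomial d 1) = q.toRingHom (monomial (dOf a t) 1)
      rw [h1, h2]
    · rw [w, wAux, dif_neg h, map_zero]
      exact q_monomial_zero a q.toRingHom hx' hy' d h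
  -- surjectivity
  have hsurj : Function.Surjective Φ := by
    intro u
    obtain ⟨p, rfl⟩ := Ideal.Quotient.mkₐ_surjective ℂ I u
    have hq2 : q p = ∑ d ∈ p.support, q (monomial d (coeff d p)) := by
      conv_lhs => rw [p.as_sum]
      rw [map_sum]
    have hmem : q p ∈ LinearMap.range Φ := by
      rw [hq2]
      refine Submodule.sum_mem _ fun d _ => ?_
      have h1 : (monomial d (coeff d p) : MvPolynomial (Fin (m + 1)) ℂ)
          = coeff d p • monomial d 1 := by rw [smul_monomial, smul_eq_mul, mul_one]
      rw [h1, map_smul, keyΦ d]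
      exact Submodule.smul_mem _ _ (LinearMap.mem_range_self Φ _)
    exact hmem
  -- injectivity
  have hinj : Function.Injective Φ := by
    rw [injective_iff_map_eq_zero]
    intro c hc
    set pp : MvPolynomial (Fin (m + 1)) ℂ := ∑ t : T a m, c t • monomial (dOf a t) 1 with hpp
    have h1 : Φ c = q pp := by
      rw [hΦdef, Module.Basis.constr_apply_fintype, hpp, map_sum]
      simp only [Pi.basisFun_equivFun, LinearEquiv.refl_apply, map_smul]
    have h2 : pp ∈ I := by
      rw [← Ideal.Quotient.eq_zero_iff_mem]
      have : q pp = 0 := by rw [← h1, hc]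
      rwa [hqdef, Ideal.Quotient.mkₐ_eq_mk] at this
    have h3 : Psi a m pp = 0 := Psi_vanish a h2
    have h4 : Psi a m pp = c := by
      rw [hpp, map_sum]
      have h5 : ∀ t : T a m, Psi a m (c t • monomial (dOf a t) 1)
          = c t • (Pi.single t 1 : T a m → ℂ) := by
        intro t
        rw [map_smul, Psi_monomial, one_smul, w_dOf]
      rw [Finset.sum_congr rfl fun t _ => h5 t]
      funext s
      rw [Finset.sum_apply]
      rw [Finset.sum_eq_single s (fun t _ hts => by simp [Pi.single_apply, Ne.symm hts])
        (fun h => absurd (Finset.mem_univ s) h)]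
      simp
    rw [h4] at h3
    exact h3
  have e : (T a m → ℂ) ≃ₗ[ℂ] (MvPolynomial (Fin (m + 1)) ℂ ⧸ I) :=
    LinearEquiv.ofBijective Φ ⟨hinj, hsurj⟩
  rw [← e.finrank_eq, Module.finrank_pi, card_T]
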